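/- Let $F$ be a field and let $u_1,\dots,u_r$ be distinct nonzero elements of $F$ such that $u_i u_j \neq 1$ for all $i,j$. Then the $r\times r$ matrix with $(i,j)$ entry $1/(1-u_i u_j)$ is invertible. -/

import Mathlib

open Polynomial Finset

/-- The Cauchy-type matrix `(1/(1 - uᵢ uⱼ))` built from distinct nonzero elements
`u₁, …, u_r` of a field with `uᵢ uⱼ ≠ 1` for all `i, j` is invertible. -/
theorem stmt0 {F : Type*} [Field F] {r : ℕ} (u : Fin r → F)
    (hinj : Function.Injective u) (h0 : ∀ i, u i ≠ 0)
    (h1 : ∀ i j, u i * u j ≠ 1) :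
    IsUnit (Matrix.of (fun i j : Fin r => (1 - u i * u j)⁻¹)) := by
  classical
  rw [Matrix.isUnit_iff_isUnit_det, isUnit_iff_ne_zero]
  intro hdet
  obtain ⟨v, hv, hMv⟩ := (Matrix.exists_mulVec_eq_zero_iff).2 hdet
  have hne : ∀ i j, (1 : F) - u i * u j ≠ 0 := by
    intro i j h
    exact h1 i j (by linear_combination -h)
  -- define the polynomial
  set P : F[X] := ∑ j, C (v j) * ∏ k ∈ univ.erase j, (1 - C (u k) * X) with hP
  have hdeg : P.natDegree < r := by
    rcases Nat.eq_zero_or_pos r with hr | hr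
    · exfalso; apply hv; funext i; exact absurd i.2 (by omega)
    refine lt_of_le_of_lt (Polynomial.natDegree_sum_le_of_forall_le (n := r - 1) _ _ ?_) (by omega)
    intro j _
    · 
      refine le_trans (natDegree_mul_le) ?_
      simp only [natDegree_C, zero_add]
      refine le_trans (Polynomial.natDegree_prod_le _ _) ?_
      refine le_trans (Finset.sum_le_card_nsmul _ _ 1 ?_) ?_
      · intro k _
        refine le_trans (natDegree_sub_le _ _) ?_
        simp [natDegree_mul_le]
        exact le_trans (natDegree_mul_le) (by simp)
      · simp [Finset.card_erase_of_mem]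
  have hevalP : ∀ i, P.eval (u i) = 0 := by
    intro i
    have hrow : ∑ j, (1 - u j * u i)⁻¹ * v j = 0 := by
      have := congrFun hMv i
      simp [Matrix.mulVec, dotProduct] at this
      simpa [mul_comm (u i)] using this
    have key : P.eval (u i) = (∏ k, (1 - u k * u i)) * ∑ j, (1 - u j * u i)⁻¹ * v j := by
      rw [Finset.mul_sum, hP]
      simp only [eval_finset_sum, eval_mul, eval_C, eval_prod, eval_sub, eval_one, eval_mul,
        eval_X]
      refine Finset.sum_congr rfl ?_
      intro j _
      rw [← Finset.mul_prod_erase univ (fun k => 1 - u k * u i) (Finset.mem_univ j)]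
      field_simp [hne j i, hne i j]
      simp only [mul_comm (u i)]
    rw [key, hrow, mul_zero]
  have hP0 : P = 0 :=
    Polynomial.eq_zero_of_natDegree_lt_card_of_eval_eq_zero P hinj hevalP
      (by simpa using hdeg)
  apply hv
  funext j
  have := congrArg (Polynomial.eval (u j)⁻¹) hP0
  rw [hP] at this
  simp only [eval_finset_sum, eval_mul, eval_C, eval_prod, eval_sub, eval_one, eval_mul,
    eval_X, eval_zero] at this
  have hsingle : ∀ l ∈ Finset.univ, l ≠ j →
      v l * ∏ k ∈ univ.erase l, (1 - u k * (u j)⁻¹) = 0 := by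
    intro l _ hlj
    have : (1 - u j * (u j)⁻¹) = 0 := by
      rw [mul_inv_cancel₀ (h0 j), sub_self]
    exact mul_eq_zero_of_right _ (Finset.prod_eq_zero (i := j)
      (Finset.mem_erase.2 ⟨hlj.symm, Finset.mem_univ j⟩) this)
  rw [Finset.sum_eq_single j hsingle (by simp)] at this
  have hprod : ∏ k ∈ univ.erase j, (1 - u k * (u j)⁻¹) ≠ 0 := by
    apply Finset.prod_ne_zero_iff.2
    intro k hk h
    field_simp [h0 j] at h
    exact (Finset.mem_erase.1 hk).1 (hinj (sub_eq_zero.mp (h.trans (mul_zero _))).symm)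
  exact (mul_eq_zero.1 this).resolve_right hprod
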